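/- Let k ≥ 2, J > 0 and s : ZMod k → {−1,+1} with ∏_i s_i = 1, and let A be the k × k real matrix with A_{ii} = −2, A_{i,c(i)} = s_i J (c(i) = i+1 mod k) and all other entries 0. If J < 2 then every complex eigenvalue of A has strictly negative real part; if J > 2 then J − 2 is a real eigenvalue of A with strictly positive real part. In particular, the fixed point (1/2,…,1/2) of the non-frustrated cyclic system loses linear stability exactly at J_c = 2, through a real eigenvalue crossing zero. -/

import Mathlib

noncomputable def cycA (k : ℕ) (J : ℝ) (s : ZMod k → ℝ) :
    Matrix (ZMod k) (ZMod k) ℝ :=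
  Matrix.of fun i j => if j = i then -2 else if j = i + 1 then s i * J else 0

private lemma cycA_mulVec (k : ℕ) [NeZero k] (hk : 2 ≤ k) (J : ℝ) (s : ZMod k → ℝ)
    (v : ZMod k → ℂ) (i : ZMod k) :
    ((cycA k J s).map (fun a => (a:ℂ))).mulVec v i
      = -2 * v i + ((s i * J : ℝ) : ℂ) * v (i+1) := by
  haveI : Fact (1 < k) := ⟨hk⟩
  have hne : i + 1 ≠ i := by
    intro h
    exact one_ne_zero (add_left_cancel (a := i) (b := 1) (c := 0) (by simp [h]))
  have : ∀ j : ZMod k,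
      ((cycA k J s).map (fun a => (a:ℂ))) i j * v j
      = (if j = i then -2 * v i else 0)
        + (if j = i + 1 then ((s i * J : ℝ):ℂ) * v (i+1) else 0) := by
    intro j
    by_cases h1 : j = i
    · simp [cycA, h1, hne, Matrix.map_apply]
    · by_cases h2 : j = i + 1
      · simp [cycA, h1, h2, Matrix.map_apply]
      · simp [cycA, h1, h2, Matrix.map_apply]
  simp only [Matrix.mulVec, dotProduct, this, Finset.sum_add_distrib,
    Finset.sum_ite_eq', Finset.mem_univ, if_true]

private lemma prod_zmod (k : ℕ) [NeZero k] (s : ZMod k → ℝ) :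
    ∏ i : ZMod k, s i = ∏ m ∈ Finset.range k, s (m : ZMod k) := by
  symm
  refine Finset.prod_nbij' (i := fun m => (m : ZMod k)) (j := fun i => i.val) ?_ ?_ ?_ ?_ ?_
  all_goals intros; simp_all [ZMod.val_lt, ZMod.natCast_val, ZMod.val_cast_of_lt, Nat.mod_eq_of_lt]

theorem statement12 (k : ℕ) [NeZero k] (hk : 2 ≤ k) (J : ℝ) (hJ : 0 < J)
    (s : ZMod k → ℝ) (hs : ∀ i, s i = 1 ∨ s i = -1)
    (hprod : ∏ i : ZMod k, s i = 1) :
    (J < 2 →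
      ∀ z : ℂ,
        Module.End.HasEigenvalue
          (Matrix.toLin' ((cycA k J s).map (fun a => (a : ℂ)))) z →
        z.re < 0) ∧
    (2 < J →
      Module.End.HasEigenvalue
        (Matrix.toLin' ((cycA k J s).map (fun a => (a : ℂ))))
        (((J - 2 : ℝ) : ℂ)) ∧
      (0 : ℝ) < J - 2) := by
  haveI : Fact (1 < k) := ⟨hk⟩
  have hs1 : ∀ i, s i * s i = 1 := by
    intro i; rcases hs i with h | h <;> simp [h]
  constructor
  · -- J < 2 case
    intro hJ2 z hz
    obtain ⟨v, hv⟩ := hz.exists_hasEigenvector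
    obtain ⟨hmem, hv0⟩ := hv
    have heq : ∀ i : ZMod k, -2 * v i + ((s i * J : ℝ):ℂ) * v (i+1) = z * v i := by
      intro i
      rw [Module.End.mem_eigenspace_iff] at hmem
      have h2 : ((cycA k J s).map (fun a => (a:ℂ))).mulVec v = z • v := by
        rw [← hmem]; simp [Matrix.toLin'_apply]
      have := congrFun h2 i
      rw [cycA_mulVec k hk J s v i] at this
      simpa using this
    obtain ⟨i1, hi1⟩ := Function.ne_iff.mp hv0
    obtain ⟨i0, -, hmax⟩ := Finset.exists_max_image (Finset.univ : Finset (ZMod k))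
      (fun i => ‖v i‖) ⟨0, Finset.mem_univ 0⟩
    have hpos : 0 < ‖v i0‖ :=
      lt_of_lt_of_le (by simpa using hi1 : 0 < ‖v i1‖)
        (hmax i1 (Finset.mem_univ i1))
    have hkey : ‖z + 2‖ * ‖v i0‖ ≤ J * ‖v i0‖ := by
      have h1 : (z + 2) * v i0 = ((s i0 * J : ℝ):ℂ) * v (i0+1) := by
        linear_combination (-1 : ℂ) * heq i0
      calc ‖z + 2‖ * ‖v i0‖
          = ‖(z + 2) * v i0‖ := (norm_mul _ _).symm
        _ = ‖((s i0 * J : ℝ):ℂ) * v (i0+1)‖ := by rw [h1]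
        _ = |s i0 * J| * ‖v (i0+1)‖ := by
              rw [norm_mul, Complex.norm_real, Real.norm_eq_abs]
        _ = J * ‖v (i0+1)‖ := by
              rcases hs i0 with h | h <;> simp [h, abs_of_pos hJ]
        _ ≤ J * ‖v i0‖ :=
              mul_le_mul_of_nonneg_left (hmax _ (Finset.mem_univ _)) hJ.le
    have habs : ‖z + 2‖ ≤ J := le_of_mul_le_mul_right hkey hpos
    have hre : (z + 2).re ≤ ‖z + 2‖ := Complex.re_le_norm _
    have hre2 : (z + 2).re = z.re + 2 := by simp
    rw [hre2] at hre
    linarith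
  · -- 2 < J case
    intro hJ2
    refine ⟨?_, by linarith⟩
    set v : ZMod k → ℂ := fun i => ((∏ m ∈ Finset.range i.val, s (m : ZMod k) : ℝ) : ℂ) with hv
    have hv0 : v 0 ≠ 0 := by simp [hv, ZMod.val_zero]
    have hrel : ∀ i : ZMod k, ((s i : ℝ):ℂ) * v (i+1) = v i := by
      intro i
      have hvi : i.val < k := ZMod.val_lt i
      have hicast : ((i.val : ℕ) : ZMod k) = i := ZMod.natCast_rightInverse i
      have hre : s i * ∏ m ∈ Finset.range ((i+1).val), s (m : ZMod k)
          = ∏ m ∈ Finset.range i.val, s (m : ZMod k) := by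
        by_cases h : i.val + 1 < k
        · have hval : (i+1).val = i.val + 1 := by
            have : i + 1 = ((i.val + 1 : ℕ) : ZMod k) := by push_cast [hicast]; ring
            rw [this, ZMod.val_cast_of_lt h]
          rw [hval, Finset.prod_range_succ, hicast]
          calc s i * ((∏ m ∈ Finset.range i.val, s (m : ZMod k)) * s i)
              = (∏ m ∈ Finset.range i.val, s (m : ZMod k)) * (s i * s i) := by ring
            _ = ∏ m ∈ Finset.range i.val, s (m : ZMod k) := by rw [hs1, mul_one]
        · have hk1 : i.val + 1 = k := by omega
          have hi1 : i + 1 = 0 := by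
            have : i + 1 = ((i.val + 1 : ℕ) : ZMod k) := by push_cast [hicast]; ring
            rw [this, hk1, ZMod.natCast_self]
          have hprodk : ∏ m ∈ Finset.range k, s (m : ZMod k) = 1 := by
            rw [← prod_zmod]; exact hprod
          have hsplit : (∏ m ∈ Finset.range i.val, s (m : ZMod k)) * s i = 1 := by
            have h2 : ∏ m ∈ Finset.range (i.val + 1), s (m : ZMod k) = 1 := by
              rw [hk1]; exact hprodk
            rw [Finset.prod_range_succ, hicast] at h2; exact h2
          have hPi : (∏ m ∈ Finset.range i.val, s (m : ZMod k)) = s i := by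
            have := congrArg (· * s i) hsplit
            try simp only at this
            rw [mul_assoc, hs1 i, mul_one, one_mul] at this
            exact this
          rw [hi1]
          simp only [ZMod.val_zero, Finset.range_zero, Finset.prod_empty, mul_one]
          exact hPi.symm
      have := congrArg (fun x : ℝ => (x : ℂ)) hre
      push_cast at this
      simpa [hv] using this
    have heig : ((cycA k J s).map (fun a => (a:ℂ))).mulVec v = ((J - 2 : ℝ):ℂ) • v := by
      funext i
      rw [cycA_mulVec k hk J s v i]
      have h1 : ((s i * J : ℝ):ℂ) * v (i+1) = (J : ℂ) * v i := by
        push_cast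
        rw [mul_comm ((s i : ℝ):ℂ) (J:ℂ), mul_assoc, hrel i]
      rw [h1]
      simp only [Pi.smul_apply, smul_eq_mul]
      push_cast
      ring
    refine Module.End.hasEigenvalue_of_hasEigenvector (x := v) ⟨?_, ?_⟩
    · rw [Module.End.mem_eigenspace_iff, Matrix.toLin'_apply, heig]
    · intro h; exact hv0 (congrFun h 0)
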